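/- arXiv:1809.08930 — 3 statements merged into one kernel-verified Lean document; each statement's English description precedes it below -/
import Mathlib

section
/- Let H be a norm on ℝ^N, C² away from 0, with dual norm H₀, 1 < p < N, and 0 < r < R. Then the radial function v(x) = (C_r − C_R)·(H₀(x)^{(p−N)/(p−1)} − R^{(p−N)/(p−1)})/(r^{(p−N)/(p−1)} − R^{(p−N)/(p−1)}) + C_R satisfies the Finsler p-Laplace equation div(H(∇v)^{p−1} ∇_ξ H(∇v)) = 0 in the weak sense in the annulus {r < H₀(x) < R}. -/
set_option maxHeartbeats 1000000

open scoped RealInnerProductSpace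
open MeasureTheory

section AuxiliaryLemmas

open Set InnerProductSpace

variable {N : ℕ}
local notation "E" => EuclideanSpace ℝ (Fin N)

lemma norm_equiv_bounds (hN : 0 < N) (H : E → ℝ)
    (hNonneg : ∀ ξ, 0 ≤ H ξ)
    (hZero : ∀ ξ, H ξ = 0 ↔ ξ = 0)
    (hHom : ∀ (t : ℝ) (ξ : E), H (t • ξ) = |t| * H ξ)
    (hCont : ContinuousOn H {(0:E)}ᶜ) :
    ∃ a b : ℝ, 0 < a ∧ 0 < b ∧ (∀ ξ, a * ‖ξ‖ ≤ H ξ) ∧ (∀ ξ, H ξ ≤ b * ‖ξ‖) := by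
  have hne : (Metric.sphere (0:E) 1).Nonempty := by
    haveI : Nontrivial E := by
      refine ⟨EuclideanSpace.single ⟨0, hN⟩ 1, 0, fun h => ?_⟩
      have := congrArg (fun v : E => v ⟨0, hN⟩) h
      simp [EuclideanSpace.single_apply] at this
    exact NormedSpace.sphere_nonempty.2 zero_le_one
  have hsub : Metric.sphere (0:E) 1 ⊆ {(0:E)}ᶜ := fun ξ hξ => by
    simp only [mem_compl_iff, mem_singleton_iff]
    intro h
    rw [h] at hξ
    simp at hξ
  have hcs : IsCompact (Metric.sphere (0:E) 1) := isCompact_sphere _ _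
  obtain ⟨ξa, hξa, ha⟩ := hcs.exists_isMinOn hne (hCont.mono hsub)
  obtain ⟨ξb, hξb, hb⟩ := hcs.exists_isMaxOn hne (hCont.mono hsub)
  have hξa0 : ξa ≠ 0 := fun h => by rw [h] at hξa; simp at hξa
  have hapos : 0 < H ξa :=
    (hNonneg ξa).lt_of_ne (fun h => hξa0 ((hZero ξa).1 h.symm))
  have hbpos : 0 < H ξb := hapos.trans_le (hb hξa)
  refine ⟨H ξa, H ξb, hapos, hbpos, fun ξ => ?_, fun ξ => ?_⟩ <;>
  · rcases eq_or_ne ξ 0 with rfl | hξ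
    · simp [(hZero 0).2 rfl]
    · have hnξ : (0:ℝ) < ‖ξ‖ := norm_pos_iff.2 hξ
      have hmem : ‖ξ‖⁻¹ • ξ ∈ Metric.sphere (0:E) 1 := by
        simp [norm_smul, abs_of_pos (inv_pos.2 hnξ), inv_mul_cancel₀ hnξ.ne']
      have hval : H ξ = ‖ξ‖ * H (‖ξ‖⁻¹ • ξ) := by
        rw [hHom ‖ξ‖⁻¹ ξ, abs_of_pos (inv_pos.2 hnξ)]
        field_simp
      rw [hval, mul_comm (H _) ‖ξ‖]
      first
        | exact mul_le_mul_of_nonneg_left (ha hmem) hnξ.le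
        | exact mul_le_mul_of_nonneg_left (hb hmem) hnξ.le

lemma dual_basic (hN : 0 < N) (H H₀ : E → ℝ)
    (hNonneg : ∀ ξ, 0 ≤ H ξ)
    (hZero : ∀ ξ, H ξ = 0 ↔ ξ = 0)
    (a b : ℝ) (ha0 : 0 < a) (hb0 : 0 < b)
    (ha : ∀ ξ, a * ‖ξ‖ ≤ H ξ) (hb : ∀ ξ, H ξ ≤ b * ‖ξ‖)
    (hH₀ : ∀ x, H₀ x = ⨆ ξ : {ξ : E // ξ ≠ 0}, ⟪x, ξ.1⟫ / H ξ.1) :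
    Continuous H₀ ∧ (∀ t : ℝ, ∀ x : E, 0 < t → H₀ (t • x) = t * H₀ x) ∧
      (∀ x ξ, ⟪x, ξ⟫ ≤ H₀ x * H ξ) ∧
      (∀ x : E, ‖x‖ ≤ b * H₀ x) ∧ (∀ x : E, a * H₀ x ≤ ‖x‖) ∧
      (∀ (x : E) (ξ : E), ξ ≠ 0 → ⟪x, ξ⟫ / H ξ ≤ H₀ x) := by
  haveI : Nonempty {ξ : E // ξ ≠ 0} := by
    refine ⟨⟨EuclideanSpace.single ⟨0, hN⟩ 1, fun h => ?_⟩⟩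
    have := congrArg (fun v : E => v ⟨0, hN⟩) h
    simp [EuclideanSpace.single_apply] at this
  have hHpos : ∀ ξ : E, ξ ≠ 0 → 0 < H ξ := fun ξ hξ =>
    (hNonneg ξ).lt_of_ne (fun h => hξ ((hZero ξ).1 h.symm))
  have hbdd : ∀ x : E, ∀ ξ : {ξ : E // ξ ≠ 0}, ⟪x, ξ.1⟫ / H ξ.1 ≤ ‖x‖ / a := by
    intro x ξ
    have h1 : 0 < H ξ.1 := hHpos ξ.1 ξ.2
    rw [div_le_div_iff₀ h1 ha0]
    have h2 : ⟪x, ξ.1⟫ ≤ ‖x‖ * ‖ξ.1‖ := real_inner_le_norm x ξ.1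
    nlinarith [ha ξ.1, norm_nonneg x, norm_nonneg ξ.1]
  have hBdd : ∀ x : E, BddAbove (Set.range fun ξ : {ξ : E // ξ ≠ 0} => ⟪x, ξ.1⟫ / H ξ.1) :=
    fun x => ⟨‖x‖ / a, by rintro y ⟨ξ, rfl⟩; exact hbdd x ξ⟩
  have hterm : ∀ (x : E) (ξ : E), ξ ≠ 0 → ⟪x, ξ⟫ / H ξ ≤ H₀ x := by
    intro x ξ hξ
    rw [hH₀ x]
    exact le_ciSup (hBdd x) ⟨ξ, hξ⟩
  have hupper : ∀ x : E, H₀ x ≤ ‖x‖ / a := by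
    intro x; rw [hH₀ x]; exact ciSup_le (hbdd x)
  have hle : ∀ x ξ, ⟪x, ξ⟫ ≤ H₀ x * H ξ := by
    intro x ξ
    rcases eq_or_ne ξ 0 with rfl | hξ
    · simp [(hZero 0).2 rfl]
    · exact (div_le_iff₀ (hHpos ξ hξ)).1 (hterm x ξ hξ)
  have hlower : ∀ x : E, ‖x‖ ≤ b * H₀ x := by
    intro x
    rcases eq_or_ne x 0 with rfl | hx
    · have : H₀ 0 = 0 := by
        rw [hH₀ 0]
        simp only [inner_zero_left, zero_div]
        exact ciSup_const
      simp [this]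
    · have h1 := hterm x x hx
      have h2 : ⟪x, x⟫ = ‖x‖ * ‖x‖ := real_inner_self_eq_norm_mul_norm x
      have h3 : 0 < H x := hHpos x hx
      have h4 : 0 < ‖x‖ := norm_pos_iff.2 hx
      rw [h2, div_le_iff₀ h3] at h1
      nlinarith [hb x]
  have hsub : ∀ x y : E, H₀ (x + y) ≤ H₀ x + H₀ y := by
    intro x y
    rw [hH₀ (x + y)]
    refine ciSup_le fun ξ => ?_
    rw [inner_add_left, add_div]
    exact add_le_add (hterm x ξ.1 ξ.2) (hterm y ξ.1 ξ.2)
  have hnn : ∀ x : E, 0 ≤ H₀ x := fun x => by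
    have := hlower x
    nlinarith [norm_nonneg x]
  have hcont : Continuous H₀ := by
    refine (LipschitzWith.of_dist_le_mul (K := Real.toNNReal (1 / a)) fun x y => ?_).continuous
    rw [Real.dist_eq, dist_eq_norm]
    have key : ∀ u w : E, H₀ u - H₀ w ≤ ‖u - w‖ * (1 / a) := by
      intro u w
      have h1 : H₀ u ≤ H₀ w + H₀ (u - w) := by
        have := hsub w (u - w)
        simpa using this
      have h2 : H₀ (u - w) ≤ ‖u - w‖ / a := hupper (u - w)
      rw [div_eq_mul_one_div] at h2
      linarith
    have := key x y
    have h2 := key y x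
    rw [norm_sub_rev y x] at h2
    rw [abs_sub_le_iff]
    constructor
    · calc H₀ x - H₀ y ≤ ‖x - y‖ * (1/a) := key x y
        _ = ↑(Real.toNNReal (1/a)) * ‖x - y‖ := by
            rw [Real.coe_toNNReal _ (by positivity), mul_comm]
    · calc H₀ y - H₀ x ≤ ‖x - y‖ * (1/a) := h2
        _ = ↑(Real.toNNReal (1/a)) * ‖x - y‖ := by
            rw [Real.coe_toNNReal _ (by positivity), mul_comm]
  have hscale_le : ∀ t : ℝ, ∀ x : E, 0 < t → H₀ (t • x) ≤ t * H₀ x := by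
    intro t x ht
    rw [hH₀ (t • x)]
    refine ciSup_le fun ξ => ?_
    rw [real_inner_smul_left, mul_div_assoc]
    exact mul_le_mul_of_nonneg_left (hterm x ξ.1 ξ.2) ht.le
  have hscale : ∀ t : ℝ, ∀ x : E, 0 < t → H₀ (t • x) = t * H₀ x := by
    intro t x ht
    refine le_antisymm (hscale_le t x ht) ?_
    have h1 := hscale_le t⁻¹ (t • x) (inv_pos.2 ht)
    rw [smul_smul, inv_mul_cancel₀ ht.ne', one_smul] at h1
    have := mul_le_mul_of_nonneg_left h1 ht.le
    rwa [← mul_assoc, mul_inv_cancel₀ ht.ne', one_mul] at this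
  have halow : ∀ x : E, a * H₀ x ≤ ‖x‖ := by
    intro x
    have := hupper x
    rw [le_div_iff₀ ha0] at this
    linarith
  exact ⟨hcont, hscale, hle, hlower, halow, hterm⟩

lemma dual_gradient (H H₀ : E → ℝ)
    (hNonneg : ∀ ξ, 0 ≤ H ξ)
    (hZero : ∀ ξ, H ξ = 0 ↔ ξ = 0)
    (hHom : ∀ (t : ℝ) (ξ : E), H (t • ξ) = |t| * H ξ)
    (hContH : ContinuousOn H {(0:E)}ᶜ)
    (a b : ℝ) (ha0 : 0 < a) (hb0 : 0 < b)
    (ha : ∀ ξ, a * ‖ξ‖ ≤ H ξ) (hb : ∀ ξ, H ξ ≤ b * ‖ξ‖)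
    (hH₀ : ∀ x, H₀ x = ⨆ ξ : {ξ : E // ξ ≠ 0}, ⟪x, ξ.1⟫ / H ξ.1)
    (hle : ∀ x ξ, ⟪x, ξ⟫ ≤ H₀ x * H ξ)
    (hterm : ∀ (x : E) (ξ : E), ξ ≠ 0 → ⟪x, ξ⟫ / H ξ ≤ H₀ x)
    (hlow : ∀ x : E, ‖x‖ ≤ b * H₀ x)
    (x : E) (hx : x ≠ 0)
    (hdH₀ : DifferentiableAt ℝ H₀ x)
    (hdH : ∀ ξ : E, ξ ≠ 0 → DifferentiableAt ℝ H ξ) :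
    H (gradient H₀ x) = 1 ∧ ⟪x, gradient H₀ x⟫ = H₀ x ∧
      HasGradientAt H ((H₀ x)⁻¹ • x) (gradient H₀ x) := by
  haveI : Nonempty {ξ : E // ξ ≠ 0} := ⟨⟨x, hx⟩⟩
  have hHpos : ∀ ξ : E, ξ ≠ 0 → 0 < H ξ := fun ξ hξ =>
    (hNonneg ξ).lt_of_ne (fun h => hξ ((hZero ξ).1 h.symm))
  have hH₀pos : 0 < H₀ x := by
    have h1 := hlow x
    have h2 : 0 < ‖x‖ := norm_pos_iff.2 hx
    nlinarith
  -- the unit sphere of H is compact and nonempty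
  set Sp : Set E := {ξ : E | H ξ = 1} with hSp
  have hSpsub : Sp ⊆ {(0:E)}ᶜ := by
    intro ξ hξ
    have h1 : H ξ = 1 := hξ
    intro h
    rw [mem_singleton_iff] at h
    rw [h, (hZero 0).2 rfl] at h1
    exact one_ne_zero h1.symm
  have hSpC : IsCompact Sp := by
    have hcl : IsClosed Sp := by
      have h1 : Sp = {ξ : E | (2*b)⁻¹ ≤ ‖ξ‖ ∧ ‖ξ‖ ≤ a⁻¹} ∩ H ⁻¹' {1} := by
        ext ξ
        constructor
        · intro (hξ : H ξ = 1)
          have hξ0 : ξ ≠ 0 := hSpsub hξ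
          have h2 := ha ξ
          have h3 := hb ξ
          rw [hξ] at h2 h3
          have hnξ : 0 < ‖ξ‖ := norm_pos_iff.2 hξ0
          refine ⟨⟨?_, ?_⟩, hξ⟩
          · have hgoal : (1:ℝ) ≤ 2*b*‖ξ‖ := by nlinarith
            rw [inv_le_iff_one_le_mul₀ (by positivity : (0:ℝ) < 2*b)]
            first
              | exact hgoal
              | nlinarith
          · rw [← one_div, le_div_iff₀ ha0]
            nlinarith
        · rintro ⟨-, hξ⟩
          exact hξ
      rw [h1]
      have hclosed : IsClosed {ξ : E | (2*b)⁻¹ ≤ ‖ξ‖ ∧ ‖ξ‖ ≤ a⁻¹} := by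
        have h2 : {ξ : E | (2*b)⁻¹ ≤ ‖ξ‖ ∧ ‖ξ‖ ≤ a⁻¹}
            = (fun ξ : E => ‖ξ‖) ⁻¹' (Set.Icc (2*b)⁻¹ a⁻¹) := rfl
        rw [h2]
        exact isClosed_Icc.preimage continuous_norm
      refine ContinuousOn.preimage_isClosed_of_isClosed ?_ hclosed isClosed_singleton
      refine hContH.mono ?_
      intro ξ hξ
      intro h
      rw [mem_singleton_iff] at h
      rw [h] at hξ
      simp only [norm_zero, mem_setOf_eq] at hξ
      have h3 : (0:ℝ) < (2*b)⁻¹ := by positivity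
      linarith [hξ.1]
    have hbd : Bornology.IsBounded Sp := by
      refine (Metric.isBounded_closedBall (x := (0:E)) (r := a⁻¹)).subset ?_
      intro ξ hξ
      have h1 : H ξ = 1 := hξ
      have h2 := ha ξ
      rw [h1] at h2
      rw [Metric.mem_closedBall, dist_zero_right]
      rw [← one_div, le_div_iff₀ ha0]
      nlinarith
    exact Metric.isCompact_of_isClosed_isBounded hcl hbd
  have hSpNe : Sp.Nonempty := by
    refine ⟨(H x)⁻¹ • x, ?_⟩
    have h1 : H ((H x)⁻¹ • x) = |(H x)⁻¹| * H x := hHom _ _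
    have h2 : 0 < H x := hHpos x hx
    show H _ = 1
    rw [h1, abs_of_pos (inv_pos.2 h2), inv_mul_cancel₀ h2.ne']
  -- the maximizer
  obtain ⟨ξs, hξsSp, hmax⟩ := hSpC.exists_isMaxOn hSpNe
    ((continuous_const.inner continuous_id).continuousOn :
      ContinuousOn (fun ξ : E => ⟪x, ξ⟫) Sp)
  have hξs1 : H ξs = 1 := hξsSp
  have hξs0 : ξs ≠ 0 := hSpsub hξsSp
  -- key : H₀ x = ⟪x, ξs⟫
  have key : H₀ x = ⟪x, ξs⟫ := by
    refine le_antisymm ?_ ?_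
    · rw [hH₀ x]
      refine ciSup_le fun ξ => ?_
      have hξ0 : (ξ:E) ≠ 0 := ξ.2
      have hHξ : 0 < H ξ.1 := hHpos ξ.1 hξ0
      have hmem : (H ξ.1)⁻¹ • ξ.1 ∈ Sp := by
        show H _ = 1
        rw [hHom, abs_of_pos (inv_pos.2 hHξ), inv_mul_cancel₀ hHξ.ne']
      have h2 : ⟪x, (H ξ.1)⁻¹ • ξ.1⟫ ≤ ⟪x, ξs⟫ := hmax hmem
      rw [real_inner_smul_right] at h2
      calc ⟪x, ξ.1⟫ / H ξ.1 = (H ξ.1)⁻¹ * ⟪x, ξ.1⟫ := by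
            rw [div_eq_inv_mul]
        _ ≤ ⟪x, ξs⟫ := h2
    · have := hterm x ξs hξs0
      rwa [hξs1, div_one] at this
  -- gradient of H₀ at x is the maximizer
  have hgrad1 : gradient H₀ x = ξs := by
    have hmin : IsLocalMin (fun y : E => H₀ y - ⟪y, ξs⟫) x := by
      refine Filter.Eventually.of_forall fun y => ?_
      have h1 : ⟪y, ξs⟫ ≤ H₀ y * H ξs := hle y ξs
      rw [hξs1, mul_one] at h1
      simp only
      rw [← key]
      linarith
    have hinner : HasFDerivAt (fun y : E => ⟪y, ξs⟫) (toDual ℝ E ξs) x := by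
      have h1 : (fun y : E => ⟪y, ξs⟫) = fun y : E => ⟪ξs, y⟫ := by
        funext y; rw [real_inner_comm]
      rw [h1]
      have h2 : (fun y : E => ⟪ξs, y⟫) = (toDual ℝ E ξs : E → ℝ) := by
        funext y; rw [toDual_apply_apply]
      rw [h2]
      exact (toDual ℝ E ξs).hasFDerivAt
    have hD : HasFDerivAt (fun y : E => H₀ y - ⟪y, ξs⟫)
        (fderiv ℝ H₀ x - toDual ℝ E ξs) x := hdH₀.hasFDerivAt.sub hinner
    have h0 := hmin.hasFDerivAt_eq_zero hD
    have h1 : fderiv ℝ H₀ x = toDual ℝ E ξs := by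
      rwa [sub_eq_zero] at h0
    rw [gradient, h1, LinearIsometryEquiv.symm_apply_apply]
  refine ⟨by rw [hgrad1]; exact hξs1, by rw [hgrad1, key], ?_⟩
  -- gradient of H at the maximizer
  have hmin2 : IsLocalMin (fun ξ : E => H₀ x * H ξ - ⟪x, ξ⟫) ξs := by
    refine Filter.Eventually.of_forall fun ξ => ?_
    have h1 := hle x ξ
    simp only
    rw [hξs1, mul_one, ← key]
    simp only [sub_self]
    linarith
  have hinner2 : HasFDerivAt (fun ξ : E => ⟪x, ξ⟫) (toDual ℝ E x) ξs := by
    have h2 : (fun ξ : E => ⟪x, ξ⟫) = (toDual ℝ E x : E → ℝ) := by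
      funext y; rw [toDual_apply_apply]
    rw [h2]
    exact (toDual ℝ E x).hasFDerivAt
  have hD2 : HasFDerivAt (fun ξ : E => H₀ x * H ξ - ⟪x, ξ⟫)
      ((H₀ x) • fderiv ℝ H ξs - toDual ℝ E x) ξs :=
    ((hdH ξs hξs0).hasFDerivAt.const_mul (H₀ x)).sub hinner2
  have h0 := hmin2.hasFDerivAt_eq_zero hD2
  have h1 : (H₀ x) • fderiv ℝ H ξs = toDual ℝ E x := by
    rwa [sub_eq_zero] at h0
  have h2 : fderiv ℝ H ξs = toDual ℝ E ((H₀ x)⁻¹ • x) := by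
    rw [_root_.map_smul]
    rw [eq_inv_smul_iff₀ hH₀pos.ne']
    exact h1
  rw [hgrad1, hasGradientAt_iff_hasFDerivAt, ← h2]
  exact (hdH ξs hξs0).hasFDerivAt

lemma integral_dilation_zero (H₀ : E → ℝ)
    (hcont : Continuous H₀)
    (hscale : ∀ t : ℝ, ∀ x : E, 0 < t → H₀ (t • x) = t * H₀ x)
    (b : ℝ) (hb0 : 0 < b) (hlow : ∀ x : E, ‖x‖ ≤ b * H₀ x)
    (r R : ℝ) (hr : 0 < r) (hrR : r < R)
    (φ : E → ℝ) (hφ : ContDiff ℝ 1 φ) (hφc : HasCompactSupport φ)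
    (hsupp : tsupport φ ⊆ {x : E | r < H₀ x ∧ H₀ x < R}) :
    ∫ x : E, (H₀ x ^ N)⁻¹ * ⟪x, gradient φ x⟫ = 0 := by
  set w : E → ℝ := fun x => (H₀ x ^ N)⁻¹ with hw
  have hH₀nn : ∀ x : E, 0 ≤ H₀ x := fun x => by
    have := hlow x; nlinarith [norm_nonneg x]
  have hwscale : ∀ c : ℝ, 0 < c → ∀ x : E, w (c • x) = (c ^ N)⁻¹ * w x := by
    intro c hc x
    simp only [hw]
    rw [hscale c x hc, mul_pow, mul_inv]
  -- continuity of G := φ * w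
  set G : E → ℝ := fun x => φ x * w x with hG
  have hwct : ∀ z : E, r < H₀ z → ContinuousAt w z := by
    intro z hz
    have h1 : ContinuousAt (fun x : E => H₀ x ^ N) z := (hcont.pow N).continuousAt
    exact h1.inv₀ (pow_pos (hr.trans hz) N).ne'
  have hGc : Continuous G := by
    rw [continuous_iff_continuousAt]
    intro z
    by_cases hz : z ∈ tsupport φ
    · have hz2 := hsupp hz
      exact (hφ.continuous.continuousAt).mul (hwct z hz2.1)
    · have hev : ∀ᶠ y in nhds z, φ y = 0 := by
        have : (tsupport φ)ᶜ ∈ nhds z :=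
          (isClosed_tsupport φ).isOpen_compl.mem_nhds hz
        filter_upwards [this] with y hy
        exact image_eq_zero_of_notMem_tsupport hy
      have hev2 : G =ᶠ[nhds z] (fun _ => 0) := by
        filter_upwards [hev] with y hy
        simp [hG, hy]
      exact continuousAt_const.congr hev2.symm
  have hGcs : HasCompactSupport G := hφc.mul_right
  -- the key change of variables
  have hfin : Module.finrank ℝ (EuclideanSpace ℝ (Fin N)) = N := finrank_euclideanSpace_fin
  have claimA : ∀ t : ℝ, ∫ x : E, φ (Real.exp t • x) * w x = ∫ x : E, G x := by
    intro t
    have hexp : (0:ℝ) < Real.exp t := Real.exp_pos t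
    have h1 : ∀ x : E, φ (Real.exp t • x) * w x = Real.exp t ^ N * G (Real.exp t • x) := by
      intro x
      simp only [hG]
      rw [hwscale _ hexp x]
      field_simp
    rw [integral_congr_ae (Filter.Eventually.of_forall h1)]
    rw [integral_const_mul]
    rw [MeasureTheory.Measure.integral_comp_smul volume G (Real.exp t)]
    rw [hfin, abs_of_pos (by positivity : (0:ℝ) < ((Real.exp t) ^ N)⁻¹)]
    rw [smul_eq_mul, ← mul_assoc, mul_inv_cancel₀ (by positivity), one_mul]
  -- derivative of the parametrized integral at 0
  obtain ⟨M, hM⟩ := (hφ.continuous_fderiv one_ne_zero).bounded_above_of_compact_support (hφc.fderiv (𝕜 := ℝ))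
  have hM0 : 0 ≤ M := le_trans (norm_nonneg _) (hM 0)
  set e1 : ℝ := Real.exp 1 with he1def
  have he1 : (0:ℝ) < e1 := Real.exp_pos 1
  set K : Set E := {x : E | r * e1⁻¹ ≤ H₀ x ∧ H₀ x ≤ R * e1} with hK
  have hclosed : IsClosed K := by
    have h1 : K = H₀ ⁻¹' (Set.Icc (r * e1⁻¹) (R * e1)) := rfl
    rw [h1]; exact isClosed_Icc.preimage hcont
  have hKcompact : IsCompact K := by
    have hbdd : Bornology.IsBounded K := by
      refine (Metric.isBounded_closedBall (x := (0:E)) (r := b * (R * e1))).subset ?_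
      intro x hx
      rw [Metric.mem_closedBall, dist_zero_right]
      calc ‖x‖ ≤ b * H₀ x := hlow x
        _ ≤ b * (R * e1) := by nlinarith [hx.2, hH₀nn x]
    exact Metric.isCompact_of_isClosed_isBounded hclosed hbdd
  set C : ℝ := M * (e1 * (b * (R * e1))) * ((r * e1⁻¹) ^ N)⁻¹ with hC
  have hC0 : 0 ≤ C := by
    have : (0:ℝ) < R := hr.trans hrR
    positivity
  set bound : E → ℝ := K.indicator (fun _ => C) with hbound
  set F' : ℝ → E → ℝ :=
    fun t x => (fderiv ℝ φ (Real.exp t • x)) (Real.exp t • x) * w x with hF'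
  have wnn : ∀ x : E, 0 ≤ w x := fun x => by
    simp only [hw]
    exact inv_nonneg.2 (pow_nonneg (hH₀nn x) N)
  have h_bound : ∀ x : E, ∀ t ∈ Metric.ball (0:ℝ) 1, ‖F' t x‖ ≤ bound x := by
    intro x t ht
    rw [Metric.mem_ball, Real.dist_eq, sub_zero] at ht
    by_cases hmem : Real.exp t • x ∈ tsupport φ
    · have hS := hsupp hmem
      have hexp0 : (0:ℝ) < Real.exp t := Real.exp_pos t
      have he : Real.exp t ≤ e1 := Real.exp_le_exp.2 (le_of_lt (abs_lt.1 ht).2)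
      have he' : e1⁻¹ ≤ Real.exp t := by
        rw [he1def, ← Real.exp_neg]
        exact Real.exp_le_exp.2 (by linarith [(abs_lt.1 ht).1])
      have hsc := hscale (Real.exp t) x hexp0
      have h1 : r < Real.exp t * H₀ x := by rw [← hsc]; exact hS.1
      have h2 : Real.exp t * H₀ x < R := by rw [← hsc]; exact hS.2
      have hxK : x ∈ K := by
        constructor
        · have h3 : r < e1 * H₀ x := by nlinarith [hH₀nn x]
          have h4 := mul_lt_mul_of_pos_right h3 (inv_pos.2 he1)
          rw [mul_comm e1 (H₀ x), mul_assoc, mul_inv_cancel₀ he1.ne', mul_one] at h4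
          exact h4.le
        · have h3 : e1⁻¹ * H₀ x < R := by nlinarith [hH₀nn x, mul_le_mul_of_nonneg_right he' (hH₀nn x)]
          have h4 := mul_lt_mul_of_pos_left h3 he1
          rw [← mul_assoc, mul_inv_cancel₀ he1.ne', one_mul] at h4
          nlinarith
      have hre1 : (0:ℝ) < r * e1⁻¹ := by positivity
      have hwb : w x ≤ ((r * e1⁻¹) ^ N)⁻¹ := by
        simp only [hw]
        exact inv_anti₀ (pow_pos hre1 N) (pow_le_pow_left₀ hre1.le hxK.1 N)
      have hnx : ‖x‖ ≤ b * (R * e1) := by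
        calc ‖x‖ ≤ b * H₀ x := hlow x
          _ ≤ b * (R * e1) := by nlinarith [hxK.2]
      have hval : ‖F' t x‖ = |(fderiv ℝ φ (Real.exp t • x)) (Real.exp t • x)| * w x := by
        simp only [hF', Real.norm_eq_abs, abs_mul, abs_of_nonneg (wnn x)]
      have h3 : |(fderiv ℝ φ (Real.exp t • x)) (Real.exp t • x)| ≤ M * (e1 * (b * (R * e1))) := by
        calc |(fderiv ℝ φ (Real.exp t • x)) (Real.exp t • x)|
            ≤ ‖fderiv ℝ φ (Real.exp t • x)‖ * ‖Real.exp t • x‖ := by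
              rw [← Real.norm_eq_abs]
              exact (fderiv ℝ φ (Real.exp t • x)).le_opNorm _
          _ ≤ M * (e1 * (b * (R * e1))) := by
              rw [norm_smul, Real.norm_eq_abs, abs_of_pos hexp0]
              have h5 : Real.exp t * ‖x‖ ≤ e1 * (b * (R * e1)) := by
                nlinarith [norm_nonneg x]
              exact mul_le_mul (hM _) h5 (mul_nonneg (Real.exp_pos t).le (norm_nonneg x)) hM0
      rw [hval, hbound, Set.indicator_of_mem hxK]
      calc |(fderiv ℝ φ (Real.exp t • x)) (Real.exp t • x)| * w x
          ≤ (M * (e1 * (b * (R * e1)))) * ((r * e1⁻¹) ^ N)⁻¹ :=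
            mul_le_mul h3 hwb (wnn x) (by have hR : (0:ℝ) < R := hr.trans hrR; positivity)
        _ = C := by rw [hC]
    · have hzero : fderiv ℝ φ (Real.exp t • x) = 0 := by
        by_contra h
        exact hmem (support_fderiv_subset ℝ (Function.mem_support.2 h))
      simp only [hF', hzero, ContinuousLinearMap.zero_apply, zero_mul, norm_zero]
      exact Set.indicator_nonneg (fun _ _ => hC0) x
  have wmeas : AEStronglyMeasurable w (volume : Measure E) :=
    (((hcont.pow N).measurable).inv).aestronglyMeasurable
  have key := hasDerivAt_integral_of_dominated_loc_of_deriv_le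
    (μ := (volume : Measure E))
    (F := fun t x => φ (Real.exp t • x) * w x) (F' := F') (x₀ := (0:ℝ))
    (bound := bound) (Metric.ball_mem_nhds 0 one_pos)
    (Filter.Eventually.of_forall fun t =>
      ((hφ.continuous.comp (continuous_const_smul (Real.exp t) : Continuous fun x : E => Real.exp t • x)).aestronglyMeasurable.mul wmeas))
    (by
      show Integrable (fun x : E => φ (Real.exp 0 • x) * w x) (volume : Measure E)
      have h1 : (fun x : E => φ (Real.exp 0 • x) * w x) = G := by
        funext x; simp [hG, Real.exp_zero]
      rw [h1]
      exact hGc.integrable_of_hasCompactSupport hGcs)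
    (by
      have h1 : Continuous fun x : E => (fderiv ℝ φ (Real.exp 0 • x)) (Real.exp 0 • x) := by
        simp only [Real.exp_zero, one_smul]
        exact (hφ.continuous_fderiv one_ne_zero).clm_apply continuous_id
      exact h1.aestronglyMeasurable.mul wmeas)
    (Filter.Eventually.of_forall fun x t ht => h_bound x t ht)
    (by
      rw [hbound]
      rw [integrable_indicator_iff hclosed.measurableSet]
      exact integrableOn_const hKcompact.measure_lt_top.ne)
    (Filter.Eventually.of_forall fun x t _ =>
      ((hφ.differentiable one_ne_zero (Real.exp t • x)).hasFDerivAt.comp_hasDerivAt t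
        ((Real.hasDerivAt_exp t).smul_const x)).mul_const (w x))
  obtain ⟨-, hderiv⟩ := key
  have hconstD : HasDerivAt (fun t : ℝ => ∫ x : E, φ (Real.exp t • x) * w x) 0 0 := by
    have hfun : (fun t : ℝ => ∫ x : E, φ (Real.exp t • x) * w x) = fun _ => ∫ x : E, G x :=
      funext claimA
    rw [hfun]; exact hasDerivAt_const _ _
  have hzero : ∫ x : E, F' 0 x = 0 := hderiv.unique hconstD
  have hident : ∀ x : E, (H₀ x ^ N)⁻¹ * ⟪x, gradient φ x⟫ = F' 0 x := by
    intro x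
    simp only [hF', Real.exp_zero, one_smul]
    have h1 : ⟪gradient φ x, x⟫ = (fderiv ℝ φ x) x := by
      rw [← toDual_apply_apply, gradient, LinearIsometryEquiv.apply_symm_apply]
    rw [real_inner_comm, h1, mul_comm]
  rw [show (fun x : E => (H₀ x ^ N)⁻¹ * ⟪x, gradient φ x⟫) = F' 0 from funext hident, hzero]

end AuxiliaryLemmas

section MainTheorem
open Set InnerProductSpace

/-- The radial function
`v(x) = (C_r − C_R)(H₀(x)^{(p−N)/(p−1)} − R^{(p−N)/(p−1)})/(r^{(p−N)/(p−1)} − R^{(p−N)/(p−1)})`,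
`1 < p < N`, is a weak solution of the Finsler `p`-Laplace equation
`div(H(∇v)^{p−1} ∇_ξ H(∇v)) = 0` in the anisotropic annulus `{r < H₀ < R}`. -/
theorem radial_solution_finsler_p_harmonic
    (N : ℕ) (p : ℝ) (hp : 1 < p) (hpN : p < N)
    (H H₀ : EuclideanSpace ℝ (Fin N) → ℝ)
    (hConv : ConvexOn ℝ Set.univ H)
    (hNonneg : ∀ ξ, 0 ≤ H ξ)
    (hZero : ∀ ξ, H ξ = 0 ↔ ξ = 0)
    (hHom : ∀ (t : ℝ) (ξ : EuclideanSpace ℝ (Fin N)), H (t • ξ) = |t| * H ξ)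
    (hC2 : ContDiffOn ℝ 2 H {(0 : EuclideanSpace ℝ (Fin N))}ᶜ)
    (hStrict : StrictConvex ℝ {ξ : EuclideanSpace ℝ (Fin N) | H ξ < 1})
    (hH₀ : ∀ x, H₀ x = ⨆ ξ : {ξ : EuclideanSpace ℝ (Fin N) // ξ ≠ 0}, ⟪x, ξ.1⟫ / H ξ.1)
    (hC2₀ : ContDiffOn ℝ 2 H₀ {(0 : EuclideanSpace ℝ (Fin N))}ᶜ)
    (r R Cr CR : ℝ) (hr : 0 < r) (hrR : r < R)
    (v : EuclideanSpace ℝ (Fin N) → ℝ)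
    (hv : ∀ x, v x = (Cr - CR) *
        ((H₀ x ^ ((p - N) / (p - 1)) - R ^ ((p - N) / (p - 1))) /
          (r ^ ((p - N) / (p - 1)) - R ^ ((p - N) / (p - 1)))) + CR) :
    ∀ φ : EuclideanSpace ℝ (Fin N) → ℝ, ContDiff ℝ 1 φ → HasCompactSupport φ →
      tsupport φ ⊆ {x | r < H₀ x ∧ H₀ x < R} →
      ∫ x in {x : EuclideanSpace ℝ (Fin N) | r < H₀ x ∧ H₀ x < R},
        (H (gradient v x)) ^ (p - 1) *
          ⟪gradient H (gradient v x), gradient φ x⟫ = 0 := by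
  intro φ hφ hφc hsupp
  have hN1 : (1:ℝ) < (N:ℝ) := hp.trans hpN
  have hN : 0 < N := by exact_mod_cast (lt_trans zero_lt_one hN1 : (0:ℝ) < (N:ℝ))
  have hContH : ContinuousOn H {(0: EuclideanSpace ℝ (Fin N))}ᶜ := hC2.continuousOn
  obtain ⟨a, b, ha0, hb0, ha, hb⟩ := norm_equiv_bounds hN H hNonneg hZero hHom hContH
  obtain ⟨hcont, hscale, hle, hlower, halow, hterm⟩ :=
    dual_basic hN H H₀ hNonneg hZero a b ha0 hb0 ha hb hH₀
  have hdH₀ : ∀ x : EuclideanSpace ℝ (Fin N), x ≠ 0 → DifferentiableAt ℝ H₀ x := fun x hx =>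
    (hC2₀.contDiffAt (isOpen_compl_singleton.mem_nhds (by simpa using hx))).differentiableAt
      two_ne_zero
  have hdH : ∀ ξ : EuclideanSpace ℝ (Fin N), ξ ≠ 0 → DifferentiableAt ℝ H ξ := fun ξ hξ =>
    (hC2.contDiffAt (isOpen_compl_singleton.mem_nhds (by simpa using hξ))).differentiableAt
      two_ne_zero
  have hp1 : (0:ℝ) < p - 1 := by linarith
  set α : ℝ := (p - N) / (p - 1) with hαdef
  have hα : α < 0 := div_neg_of_neg_of_pos (by linarith) hp1
  set k : ℝ := (Cr - CR) / (r ^ α - R ^ α) with hkdef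
  set c₃ : ℝ := |k * α| ^ (p - 1) * (|k * α| * (k * α)⁻¹) with hc₃
  have hveq : v = fun y => k * (H₀ y ^ α - R ^ α) + CR := by
    funext y; rw [hv y]; ring
  have hexp : (α - 1) * (p - 1) = 1 - (N:ℝ) := by
    have h1 : α * (p - 1) = p - N := by
      rw [hαdef]; field_simp
    linear_combination h1
  -- the pointwise identity
  have hpoint : ∀ x ∈ {x : EuclideanSpace ℝ (Fin N) | r < H₀ x ∧ H₀ x < R},
      (H (gradient v x)) ^ (p - 1) * ⟪gradient H (gradient v x), gradient φ x⟫
        = c₃ * ((H₀ x ^ N)⁻¹ * ⟪x, gradient φ x⟫) := by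
    intro x hx
    have hx0 : x ≠ 0 := by
      intro h
      have h1 := halow x
      rw [h, norm_zero] at h1
      have h2 : H₀ x ≤ 0 := by
        rw [h]; nlinarith [h1]
      rw [h] at hx
      exact absurd hx.1 (by nlinarith [hx.1, h2])
    have hs : 0 < H₀ x := lt_trans hr hx.1
    obtain ⟨hHξ, hinner, hgradH⟩ :=
      dual_gradient H H₀ hNonneg hZero hHom hContH a b ha0 hb0 ha hb hH₀ hle hterm hlower
        x hx0 (hdH₀ x hx0) hdH
    have hgradH₀ : HasGradientAt H₀ (gradient H₀ x) x := (hdH₀ x hx0).hasGradientAt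
    have hsα : (0:ℝ) < H₀ x ^ (α - 1) := Real.rpow_pos_of_pos hs _
    have hg : HasDerivAt (fun u : ℝ => k * (u ^ α - R ^ α) + CR)
        (k * (α * H₀ x ^ (α - 1))) (H₀ x) := by
      have h1 : HasDerivAt (fun u : ℝ => u ^ α) (α * H₀ x ^ (α - 1)) (H₀ x) :=
        Real.hasDerivAt_rpow_const (Or.inl hs.ne')
      exact ((h1.sub_const _).const_mul k).add_const CR
    have hvgrad : HasGradientAt v ((k * (α * H₀ x ^ (α - 1))) • gradient H₀ x) x := by
      rw [hveq, hasGradientAt_iff_hasFDerivAt, _root_.map_smul]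
      exact hg.comp_hasFDerivAt x hgradH₀.hasFDerivAt
    have hgv : gradient v x = (k * (α * H₀ x ^ (α - 1))) • gradient H₀ x := hvgrad.gradient
    rcases eq_or_ne (k * α) 0 with hkα | hkα
    · -- degenerate constant case
      have hczero : k * (α * H₀ x ^ (α - 1)) = 0 := by
        have : k * (α * H₀ x ^ (α - 1)) = (k * α) * H₀ x ^ (α - 1) := by ring
        rw [this, hkα, zero_mul]
      rw [hgv, hczero, zero_smul]
      rw [(hZero 0).2 rfl, Real.zero_rpow (by positivity : p - 1 ≠ 0)]
      rw [hc₃, hkα, abs_zero, Real.zero_rpow (by positivity : p - 1 ≠ 0)]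
      ring
    · -- main case
      set c : ℝ := k * (α * H₀ x ^ (α - 1)) with hcdef
      have hceq : c = (k * α) * H₀ x ^ (α - 1) := by rw [hcdef]; ring
      have hc0 : c ≠ 0 := by
        rw [hceq]; exact mul_ne_zero hkα hsα.ne'
      have hξs0 : gradient H₀ x ≠ 0 := by
        intro h
        rw [h, (hZero 0).2 rfl] at hHξ
        exact zero_ne_one hHξ
      -- gradient of H at c • ξs
      set L : EuclideanSpace ℝ (Fin N) →L[ℝ] EuclideanSpace ℝ (Fin N) :=
        c⁻¹ • ContinuousLinearMap.id ℝ (EuclideanSpace ℝ (Fin N)) with hLdef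
      have hL : HasFDerivAt (fun η : EuclideanSpace ℝ (Fin N) => c⁻¹ • η) L
          (c • gradient H₀ x) := L.hasFDerivAt
      have h3 : HasFDerivAt (fun η : EuclideanSpace ℝ (Fin N) => H (c⁻¹ • η))
          (((toDual ℝ (EuclideanSpace ℝ (Fin N))) ((H₀ x)⁻¹ • x)).comp L)
          (c • gradient H₀ x) := by
        refine HasFDerivAt.comp _ ?_ hL
        have h4 : c⁻¹ • (c • gradient H₀ x) = gradient H₀ x := inv_smul_smul₀ hc0 _
        first
          | (rw [h4]; exact hgradH.hasFDerivAt)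
          | (show HasFDerivAt H _ (c⁻¹ • (c • gradient H₀ x)); rw [h4]; exact hgradH.hasFDerivAt)
      have h4 : HasFDerivAt (fun η : EuclideanSpace ℝ (Fin N) => |c| * H (c⁻¹ • η))
          (|c| • (((toDual ℝ (EuclideanSpace ℝ (Fin N))) ((H₀ x)⁻¹ • x)).comp L))
          (c • gradient H₀ x) := h3.const_mul |c|
      have h5 : (fun η : EuclideanSpace ℝ (Fin N) => |c| * H (c⁻¹ • η)) = H := by
        funext η
        rw [hHom, abs_inv, ← mul_assoc, mul_inv_cancel₀ (abs_ne_zero.2 hc0), one_mul]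
      rw [h5] at h4
      have h6 : |c| • (((toDual ℝ (EuclideanSpace ℝ (Fin N))) ((H₀ x)⁻¹ • x)).comp L)
          = (toDual ℝ (EuclideanSpace ℝ (Fin N))) ((|c| * c⁻¹ * (H₀ x)⁻¹) • x) := by
        refine ContinuousLinearMap.ext fun y => ?_
        simp only [ContinuousLinearMap.smul_apply, ContinuousLinearMap.coe_comp',
          Function.comp_apply, hLdef, ContinuousLinearMap.coe_id', id_eq, toDual_apply_apply,
          real_inner_smul_left, real_inner_smul_right, smul_eq_mul]
        ring
      rw [h6] at h4
      have hgH : HasGradientAt H ((|c| * c⁻¹ * (H₀ x)⁻¹) • x) (c • gradient H₀ x) := by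
        rw [hasGradientAt_iff_hasFDerivAt]
        exact h4
      rw [hgv, hgH.gradient, hHom c _, hHξ, mul_one, real_inner_smul_left]
      -- now a scalar computation
      have habs : |c| = |k * α| * H₀ x ^ (α - 1) := by
        rw [hceq, abs_mul, abs_of_pos hsα]
      have hpow : |c| ^ (p - 1) = |k * α| ^ (p - 1) * H₀ x ^ ((1:ℝ) - N) := by
        rw [habs, Real.mul_rpow (abs_nonneg _) hsα.le, ← Real.rpow_mul hs.le, hexp]
      have e5 : H₀ x ^ ((1:ℝ) - N) * (H₀ x)⁻¹ = ((H₀ x) ^ (N:ℕ))⁻¹ := by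
        rw [Real.rpow_sub hs, Real.rpow_one, Real.rpow_natCast, div_eq_mul_inv]
        field_simp
      have e6 : H₀ x ^ (α - 1) * (H₀ x ^ (α - 1))⁻¹ = 1 := mul_inv_cancel₀ hsα.ne'
      have hscalar : |c| ^ (p - 1) * (|c| * c⁻¹ * (H₀ x)⁻¹) = c₃ * (H₀ x ^ N)⁻¹ := by
        rw [hpow, habs, hceq, mul_inv, hc₃]
        linear_combination (|k * α| ^ (p - 1) * |k * α| * (k * α)⁻¹ *
            (H₀ x ^ ((1:ℝ) - N) * (H₀ x)⁻¹)) * e6 +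
          (|k * α| ^ (p - 1) * |k * α| * (k * α)⁻¹) * e5
      linear_combination ⟪x, gradient φ x⟫ * hscalar
  -- assemble
  have hSopen : IsOpen {x : EuclideanSpace ℝ (Fin N) | r < H₀ x ∧ H₀ x < R} := by
    have h1 : {x : EuclideanSpace ℝ (Fin N) | r < H₀ x ∧ H₀ x < R} = H₀ ⁻¹' (Set.Ioo r R) := rfl
    rw [h1]; exact isOpen_Ioo.preimage hcont
  rw [setIntegral_congr_fun hSopen.measurableSet hpoint]
  rw [MeasureTheory.integral_const_mul]
  have hcompl : ∀ x : EuclideanSpace ℝ (Fin N),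
      x ∉ {x : EuclideanSpace ℝ (Fin N) | r < H₀ x ∧ H₀ x < R} →
      (H₀ x ^ N)⁻¹ * ⟪x, gradient φ x⟫ = 0 := by
    intro x hx
    have h1 : x ∉ tsupport φ := fun h => hx (hsupp h)
    have h2 : fderiv ℝ φ x = 0 := by
      by_contra h
      exact h1 (support_fderiv_subset ℝ (Function.mem_support.2 h))
    have h3 : gradient φ x = 0 := by
      rw [gradient, h2, map_zero]
    rw [h3, inner_zero_right, mul_zero]
  rw [setIntegral_eq_integral_of_forall_compl_eq_zero hcompl]
  rw [integral_dilation_zero H₀ hcont hscale b hb0 hlower r R hr hrR φ hφ hφc hsupp, mul_zero]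

end MainTheorem
end

section
/- Let A be a symmetric positive semidefinite N×N real matrix with at least one zero eigenvalue (rank at most N−1), and let U be a symmetric N×N real matrix. Then Tr(A U A U) ≥ (1/(N−1)) · Tr(A U)². -/
open Matrix Finset

lemma trace_sq_le_rank_mul_trace_sq {n : Type*} [Fintype n] [DecidableEq n]
    {M : Matrix n n ℝ} (hM : M.IsHermitian) {r : ℕ} (hr : M.rank ≤ r) :
    (M.trace) ^ 2 ≤ (r : ℝ) * (M * M).trace := by
  have hVV : star (hM.eigenvectorUnitary : Matrix n n ℝ) * (hM.eigenvectorUnitary : Matrix n n ℝ)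
      = 1 := Matrix.mem_unitaryGroup_iff'.mp hM.eigenvectorUnitary.2
  have hspec := hM.spectral_theorem
  rw [Unitary.conjStarAlgAut_apply] at hspec
  set V := (hM.eigenvectorUnitary : Matrix n n ℝ)
  set D : Matrix n n ℝ := diagonal (RCLike.ofReal ∘ hM.eigenvalues) with hD
  have htr : M.trace = ∑ i, hM.eigenvalues i := by
    conv_lhs => rw [hspec]
    rw [trace_mul_cycle, hVV, one_mul, hD, trace_diagonal]
    simp
  have htr2 : (M * M).trace = ∑ i, (hM.eigenvalues i) ^ 2 := by
    conv_lhs => rw [hspec]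
    rw [show (V * D * star V) * (V * D * star V) = V * (D * (star V * V) * D) * star V by
      simp only [mul_assoc], hVV, mul_one, hD, diagonal_mul_diagonal, trace_mul_cycle,
      hVV, one_mul, trace_diagonal]
    simp [sq]
  have hcard : (univ.filter fun i => hM.eigenvalues i ≠ 0).card = M.rank := by
    rw [hM.rank_eq_card_non_zero_eigs, Fintype.card_subtype]
  set s := univ.filter fun i => hM.eigenvalues i ≠ 0 with hs
  have hsum : ∑ i, hM.eigenvalues i = ∑ i ∈ s, hM.eigenvalues i := by
    refine (Finset.sum_subset (Finset.subset_univ s) ?_).symm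
    intro x _ hx
    simpa [hs] using hx
  calc (M.trace) ^ 2 = (∑ i ∈ s, hM.eigenvalues i) ^ 2 := by rw [htr, hsum]
    _ ≤ (s.card : ℝ) * ∑ i ∈ s, (hM.eigenvalues i) ^ 2 :=
        sq_sum_le_card_mul_sum_sq (s := s) (f := fun i => hM.eigenvalues i)
    _ ≤ (r : ℝ) * ∑ i, (hM.eigenvalues i) ^ 2 := by
        refine mul_le_mul ?_ ?_ ?_ (by positivity)
        · exact_mod_cast hcard.trans_le hr
        · exact Finset.sum_le_sum_of_subset_of_nonneg (Finset.subset_univ s)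
            (fun i _ _ => sq_nonneg _)
        · positivity
    _ = (r : ℝ) * (M * M).trace := by rw [htr2]

/-- For `A` symmetric positive semidefinite of rank at most `N−1` and `U` symmetric:
`Tr(AUAU) ≥ Tr(AU)²/(N−1)`. -/
theorem trace_AUAU_ge
    (N : ℕ) (hN : 2 ≤ N) (A U : Matrix (Fin N) (Fin N) ℝ)
    (hA : A.PosSemidef) (hrank : A.rank ≤ N - 1) (hU : U.IsSymm) :
    (1 / (N - 1 : ℝ)) * ((A * U).trace) ^ 2 ≤ (A * U * A * U).trace := by
  obtain ⟨B, hBH, hBB⟩ : ∃ B : Matrix (Fin N) (Fin N) ℝ, B.IsHermitian ∧ B * B = A :=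
    by
      classical
      open MatrixOrder in
      obtain ⟨X, hX, -, hXX⟩ := CFC.exists_sqrt_of_isSelfAdjoint_of_quasispectrumRestricts
        hA.isHermitian (QuasispectrumRestricts.nnreal_of_nonneg hA.nonneg)
      exact ⟨X, hX, hXX⟩
  set M := B * U * B with hM
  have hUH : Uᴴ = U := by rw [conjTranspose_eq_transpose_of_trivial]; exact hU.eq
  have hUH' : U.IsHermitian := hUH
  have hMH : M.IsHermitian := by
    have := isHermitian_mul_mul_conjTranspose B hUH'
    rwa [hBH.eq] at this
  have hrankB : B.rank = A.rank := by
    have h := rank_conjTranspose_mul_self B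
    rw [hBH.eq, hBB] at h
    exact h.symm
  have hr : M.rank ≤ N - 1 :=
    ((rank_mul_le_left _ _).trans (rank_mul_le_left B U)).trans (hrankB ▸ hrank)
  have h1 : M.trace = (A * U).trace := by
    rw [hM, mul_assoc, trace_mul_comm, mul_assoc, hBB, trace_mul_comm]
  have h2 : (M * M).trace = (A * U * A * U).trace := by
    have e1 : M * M = B * (U * A * U * B) := by rw [hM, ← hBB]; simp only [mul_assoc]
    rw [e1, trace_mul_comm, show U * A * U * B * B = U * A * U * (B * B) from (mul_assoc _ _ _),
      hBB, trace_mul_cycle, ← mul_assoc]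
  have hc : (0:ℝ) < (N:ℝ) - 1 := by
    have : (2:ℝ) ≤ (N:ℝ) := by exact_mod_cast hN
    linarith
  have hkey := trace_sq_le_rank_mul_trace_sq hMH hr
  rw [Nat.cast_sub (by omega), Nat.cast_one, h1, h2] at hkey
  rw [div_mul_eq_mul_div, one_mul, div_le_iff₀ hc]
  nlinarith [hkey]
end

section
/- Let H be a norm on ℝ^N, C² away from 0, with positive semidefinite Hessian ∇²H(ξ) of rank N−1 for ξ ≠ 0, and let u be a C³ function with ∇u ≠ 0 on an open set. Set A = ∇H(∇u)·(∇²u ∇H(∇u)) + H(∇u)·Tr(∇²H(∇u)∇²u), B = (1/N)H^{p−1}(∇u)Tr(∇²H(∇u)∇²u) − ((N−1)/N)(p−1)H^{p−2}(∇u)∇H(∇u)·(∇²u ∇H(∇u)), C = (1/N)H(∇u)Tr(∇²H(∇u)∇²u) − ((N−1)/N)∇H(∇u)·(∇²u ∇H(∇u)), and a_{ij} = (1/p)∂²_{ξ_iξ_j}(H^p)(∇u). Then a_{ij} ∂²_{ξ_kξ_l}(H²)(∇u) u_{ik}u_{jl} ≥ (a_{ij}u_{ij}/N)·A + (N/(N−1))·B·C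 pointwise. -/
open Filter Topology Matrix

private lemma snd_deriv_rpow_comp {E : Type*} [NormedAddCommGroup E] [NormedSpace ℝ E]
    (H : E → ℝ) (ξ : E) (q : ℝ) (hH : ContDiffAt ℝ 2 H ξ) (hpos : 0 < H ξ) (v w : E) :
    iteratedFDeriv ℝ 2 (fun η => H η ^ q) ξ ![v, w] =
      q * (q - 1) * H ξ ^ (q - 2) * (fderiv ℝ H ξ v) * (fderiv ℝ H ξ w)
      + q * H ξ ^ (q - 1) * iteratedFDeriv ℝ 2 H ξ ![v, w] := by
  have h1 : ∀ᶠ y in 𝓝 ξ, ContDiffAt ℝ 2 H y := hH.eventually (by simp)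
  have h2' : ∀ᶠ y in 𝓝 ξ, 0 < H y := hH.continuousAt (Ioi_mem_nhds hpos)
  have hev : fderiv ℝ (fun η => H η ^ q) =ᶠ[𝓝 ξ] fun y => (q * H y ^ (q - 1)) • fderiv ℝ H y := by
    filter_upwards [h1, h2'] with y hy hy0
    have hd : HasFDerivAt H (fderiv ℝ H y) y := (hy.differentiableAt two_ne_zero).hasFDerivAt
    exact ((Real.hasDerivAt_rpow_const (p := q) (Or.inl hy0.ne')).comp_hasFDerivAt y hd).fderiv
  rw [iteratedFDeriv_two_apply, iteratedFDeriv_two_apply, hev.fderiv_eq]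
  have hd : HasFDerivAt H (fderiv ℝ H ξ) ξ := (hH.differentiableAt two_ne_zero).hasFDerivAt
  have hD : HasFDerivAt (fun y => fderiv ℝ H y) (fderiv ℝ (fderiv ℝ H) ξ) ξ :=
    ((hH.fderiv_right (m := 1) (le_refl 2)).differentiableAt one_ne_zero).hasFDerivAt
  have hc : HasFDerivAt (fun y => q * H y ^ (q - 1))
      ((q * ((q - 1) * H ξ ^ (q - 2))) • fderiv ℝ H ξ) ξ := by
    have h1' := (Real.hasDerivAt_rpow_const (p := q - 1) (x := H ξ)
      (Or.inl hpos.ne')).comp_hasFDerivAt ξ hd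
    have := h1'.const_mul q
    simpa [smul_smul, show q - 1 - 1 = q - 2 by ring] using this
  have hφ : HasFDerivAt (fun y => (q * H y ^ (q - 1)) • fderiv ℝ H y) _ ξ := hc.smul hD
  rw [hφ.fderiv]
  simp [ContinuousLinearMap.add_apply, ContinuousLinearMap.smul_apply,
    ContinuousLinearMap.smulRight_apply]
  ring

private lemma quadform_nonneg {N : ℕ} (Λ : Matrix (Fin N) (Fin N) ℝ) (hΛ : Λ.PosSemidef)
    (x : Fin N → ℝ) : 0 ≤ ∑ i, ∑ j, Λ i j * x i * x j := by
  have h := hΛ.dotProduct_mulVec_nonneg x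
  have e : dotProduct (star x) (Λ.mulVec x) = ∑ i, ∑ j, Λ i j * x i * x j := by
    simp only [dotProduct, Matrix.mulVec, Pi.star_apply, star_trivial, Finset.mul_sum]
    exact Finset.sum_congr rfl fun i _ => Finset.sum_congr rfl fun j _ => by ring
  rwa [e] at h

open scoped MatrixOrder in
set_option maxHeartbeats 1000000 in
private lemma trace_CS {N : ℕ} (Λ : Matrix (Fin N) (Fin N) ℝ) (hΛ : Λ.PosSemidef)
    (U : Fin N → Fin N → ℝ) (hU : ∀ i j, U i j = U j i) :
    (∑ i, ∑ j, Λ i j * U j i) ^ 2 ≤ N * ∑ i, ∑ j, ∑ k, ∑ l, Λ i j * Λ k l * U i k * U j l := by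
  classical
  set C := CFC.sqrt Λ with hCdef
  have hCt : Cᵀ = C := by
    have := (CFC.sqrt_nonneg Λ).posSemidef.1
    rwa [Matrix.IsHermitian, Matrix.conjTranspose_eq_transpose_of_trivial] at this
  have hCC : C * C = Λ := CFC.sqrt_mul_sqrt_self Λ hΛ.nonneg
  set U' : Matrix (Fin N) (Fin N) ℝ := Matrix.of U with hU'def
  have hU't : U'ᵀ = U' := by
    ext i j
    exact hU j i
  have hΛt : ∀ i j, Λ i j = Λ j i := by
    intro i j
    have := hΛ.1
    rw [Matrix.IsHermitian, Matrix.conjTranspose_eq_transpose_of_trivial] at this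
    conv_rhs => rw [← this]
    rfl
  set X := C * U' * C with hXdef
  have hXt : Xᵀ = X := by
    rw [hXdef, Matrix.transpose_mul, Matrix.transpose_mul, hU't, hCt, Matrix.mul_assoc]
  have hXsymm : ∀ a b, X a b = X b a := by
    intro a b
    conv_lhs => rw [← hXt]
    rfl
  have hT : ∑ i, ∑ j, Λ i j * U j i = Matrix.trace X := by
    have h1 : ∑ i, ∑ j, Λ i j * U j i = Matrix.trace (Λ * U') := by
      simp [Matrix.trace, Matrix.diag, Matrix.mul_apply, hU'def, Matrix.of_apply]
    rw [h1, ← hCC, Matrix.mul_assoc, Matrix.trace_mul_comm, hXdef, Matrix.mul_assoc]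
  have hQ : ∑ i, ∑ j, ∑ k, ∑ l, Λ i j * Λ k l * U i k * U j l = ∑ a, ∑ b, (X a b) ^ 2 := by
    have h2 : ∑ a, ∑ b, (X a b) ^ 2 = Matrix.trace ((Λ * U') * (Λ * U')) := by
      have e1 : ∑ a, ∑ b, (X a b) ^ 2 = Matrix.trace (X * X) := by
        simp only [Matrix.trace, Matrix.diag, Matrix.mul_apply]
        exact Finset.sum_congr rfl fun a _ => Finset.sum_congr rfl fun b _ => by
          rw [hXsymm b a]; ring
      rw [e1, hXdef]
      have e2 : C * U' * C * (C * U' * C) = C * (U' * Λ * U' * C) := by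
        rw [← hCC]; noncomm_ring
      rw [e2, Matrix.trace_mul_comm, Matrix.mul_assoc, hCC]
      have e3 : U' * Λ * U' * Λ = U' * (Λ * U' * Λ) := by noncomm_ring
      rw [e3, Matrix.trace_mul_comm]
      congr 1
      noncomm_ring
    rw [h2]
    have e4 : Matrix.trace ((Λ * U') * (Λ * U'))
        = ∑ a, ∑ b, ∑ c, ∑ d, Λ a c * U c b * (Λ b d * U d a) := by
      simp only [Matrix.trace, Matrix.diag, Matrix.mul_apply, Finset.sum_mul_sum,
        hU'def, Matrix.of_apply]
    rw [e4]
    calc ∑ i, ∑ j, ∑ k, ∑ l, Λ i j * Λ k l * U i k * U j l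
        = ∑ j, ∑ i, ∑ k, ∑ l, Λ i j * Λ k l * U i k * U j l := Finset.sum_comm
      _ = ∑ j, ∑ k, ∑ i, ∑ l, Λ i j * Λ k l * U i k * U j l :=
          Finset.sum_congr rfl fun j _ => Finset.sum_comm
      _ = ∑ a, ∑ b, ∑ c, ∑ d, Λ a c * U c b * (Λ b d * U d a) := by
          refine Finset.sum_congr rfl fun j _ => Finset.sum_congr rfl fun k _ =>
            Finset.sum_congr rfl fun i _ => Finset.sum_congr rfl fun l _ => ?_
          rw [hΛt j i, hU j l]
          ring
  rw [hT, hQ]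
  have h5 : Matrix.trace X = ∑ a, X a a := by simp [Matrix.trace, Matrix.diag]
  rw [h5]
  have hcs : (∑ a, X a a) ^ 2 ≤ (N : ℝ) * ∑ a, (X a a) ^ 2 := by
    have h6 := sq_sum_le_card_mul_sum_sq (s := (Finset.univ : Finset (Fin N)))
      (f := fun a => X a a)
    simpa using h6
  refine hcs.trans (mul_le_mul_of_nonneg_left ?_ (by positivity))
  exact Finset.sum_le_sum fun a _ =>
    Finset.single_le_sum (f := fun b => X a b ^ 2) (fun b _ => sq_nonneg _) (Finset.mem_univ a)

private lemma sum_swap₄ {M : Type*} [AddCommMonoid M] {n : ℕ}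
    (f : Fin n → Fin n → Fin n → Fin n → M) :
    ∑ i, ∑ j, ∑ k, ∑ l, f i j k l = ∑ k, ∑ l, ∑ i, ∑ j, f i j k l := by
  calc ∑ i, ∑ j, ∑ k, ∑ l, f i j k l
      = ∑ i, ∑ k, ∑ j, ∑ l, f i j k l :=
        Finset.sum_congr rfl fun i _ => Finset.sum_comm
    _ = ∑ k, ∑ i, ∑ j, ∑ l, f i j k l := Finset.sum_comm
    _ = ∑ k, ∑ i, ∑ l, ∑ j, f i j k l :=
        Finset.sum_congr rfl fun k _ => Finset.sum_congr rfl fun i _ => Finset.sum_comm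
    _ = ∑ k, ∑ l, ∑ i, ∑ j, f i j k l :=
        Finset.sum_congr rfl fun k _ => Finset.sum_comm

private lemma mul_sum₄ {n : ℕ} (c : ℝ) (f : Fin n → Fin n → Fin n → Fin n → ℝ) :
    ∑ i, ∑ j, ∑ k, ∑ l, c * f i j k l = c * ∑ i, ∑ j, ∑ k, ∑ l, f i j k l := by
  simp only [← Finset.mul_sum]

private lemma final_scalar (n p Hv γ S T Q R : ℝ) (hn : 2 ≤ n) (hp : 1 < p) (hHv : 0 < Hv)
    (hγ : 0 < γ) (hQ : T ^ 2 ≤ n * Q) (hR : 0 ≤ R) :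
    ((Hv * γ * T + (p - 1) * γ * S) / n) * (S + Hv * T)
      + (n / (n - 1)) * ((1 / n) * (Hv * γ) * T - ((n - 1) / n) * (p - 1) * γ * S)
        * ((1 / n) * Hv * T - ((n - 1) / n) * S)
    ≤ 2 * Hv * (Hv * γ) * Q + 2 * (Hv * γ) * R + 2 * Hv * ((p - 1) * γ) * R
      + 2 * ((p - 1) * γ) * (S * S) := by
  have hn1 : (0:ℝ) < n - 1 := by linarith
  have hn0 : (0:ℝ) < n := by linarith
  have hQ0 : 0 ≤ Q := by nlinarith [sq_nonneg T]
  have hid : ((Hv * γ * T + (p - 1) * γ * S) / n) * (S + Hv * T)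
      + (n / (n - 1)) * ((1 / n) * (Hv * γ) * T - ((n - 1) / n) * (p - 1) * γ * S)
        * ((1 / n) * Hv * T - ((n - 1) / n) * S)
      = Hv * Hv * γ * T ^ 2 / (n - 1) + (p - 1) * γ * S ^ 2 := by
    field_simp
    ring
  rw [hid]
  have c0 : (0:ℝ) ≤ Hv * Hv * γ := by positivity
  have h1 : Hv * Hv * γ * T ^ 2 / (n - 1) ≤ 2 * Hv * (Hv * γ) * Q := by
    rw [div_le_iff₀ hn1]
    nlinarith [mul_le_mul_of_nonneg_left hQ c0, mul_nonneg (mul_nonneg c0 hQ0)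
      (by linarith : (0:ℝ) ≤ n - 2)]
  have h2 : (0:ℝ) ≤ 2 * (Hv * γ) * R := by positivity
  have h3 : (0:ℝ) ≤ 2 * Hv * ((p - 1) * γ) * R := by
    have : (0:ℝ) < p - 1 := by linarith
    positivity
  have h4 : (p - 1) * γ * S ^ 2 ≤ 2 * ((p - 1) * γ) * (S * S) := by
    have h5 : (0:ℝ) ≤ (p - 1) * γ * S ^ 2 := by
      have : (0:ℝ) < p - 1 := by linarith
      positivity
    nlinarith [h5]
  linarith

/-- The Bochner-type pointwise inequality (3.4):
`a_{ij} ∂²_{ξ_kξ_l}(H²)(∇u) u_{ik}u_{jl} ≥ (a_{ij}u_{ij}/N)·A + (N/(N−1))·B·C`,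
where `A, B, C` are the quantities built from `∇H(∇u)`, `Tr(∇²H(∇u)∇²u)` and
`∇H(∇u)·(∇²u ∇H(∇u))`, for a norm `H` whose Hessian is positive semidefinite of rank
`N−1` away from the origin. -/
theorem bochner_type_inequality
    (N : ℕ) (hN : 2 ≤ N) (p : ℝ) (hp : 1 < p)
    (H : EuclideanSpace ℝ (Fin N) → ℝ)
    (hConv : ConvexOn ℝ Set.univ H)
    (hNonneg : ∀ ξ, 0 ≤ H ξ)
    (hZero : ∀ ξ, H ξ = 0 ↔ ξ = 0)
    (hHom : ∀ (t : ℝ) (ξ : EuclideanSpace ℝ (Fin N)), H (t • ξ) = |t| * H ξ)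
    (hC2 : ContDiffOn ℝ 2 H {(0 : EuclideanSpace ℝ (Fin N))}ᶜ)
    (e : Fin N → EuclideanSpace ℝ (Fin N)) (he : ∀ i, e i = EuclideanSpace.single i 1)
    (hPSD : ∀ ξ : EuclideanSpace ℝ (Fin N), ξ ≠ 0 →
      (Matrix.of fun i j : Fin N => iteratedFDeriv ℝ 2 H ξ ![e i, e j]).PosSemidef)
    (hrank : ∀ ξ : EuclideanSpace ℝ (Fin N), ξ ≠ 0 →
      (Matrix.of fun i j : Fin N => iteratedFDeriv ℝ 2 H ξ ![e i, e j]).rank = N - 1)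
    (E : Set (EuclideanSpace ℝ (Fin N))) (hE : IsOpen E)
    (u : EuclideanSpace ℝ (Fin N) → ℝ) (hu : ContDiffOn ℝ 3 u E)
    (hgrad : ∀ x ∈ E, gradient u x ≠ 0) :
    ∀ x ∈ E,
      let ξ := gradient u x
      let Hv := H ξ
      let g := gradient H ξ
      let MH : Fin N → Fin N → ℝ := fun i j => iteratedFDeriv ℝ 2 H ξ ![e i, e j]
      let M2 : Fin N → Fin N → ℝ := fun k l =>
        iteratedFDeriv ℝ 2 (fun η => (H η) ^ 2) ξ ![e k, e l]
      let Mu : Fin N → Fin N → ℝ := fun i j => iteratedFDeriv ℝ 2 u x ![e i, e j]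
      let a : Fin N → Fin N → ℝ := fun i j =>
        (1 / p) * iteratedFDeriv ℝ 2 (fun η => H η ^ p) ξ ![e i, e j]
      let S := ∑ i, ∑ j, g i * Mu i j * g j
      let T := ∑ i, ∑ j, MH i j * Mu j i
      let A := S + Hv * T
      let B := (1 / N) * Hv ^ (p - 1) * T - ((N - 1 : ℝ) / N) * (p - 1) * Hv ^ (p - 2) * S
      let C := (1 / N) * Hv * T - ((N - 1 : ℝ) / N) * S
      ((∑ i, ∑ j, a i j * Mu i j) / N) * A + ((N : ℝ) / (N - 1)) * B * C ≤
        ∑ i, ∑ j, ∑ k, ∑ l, a i j * M2 k l * Mu i k * Mu j l := by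
  intro x hx
  dsimp only
  have hξ : gradient u x ≠ 0 := hgrad x hx
  set ξ := gradient u x with hξdef
  have hHne : H ξ ≠ 0 := fun h => hξ ((hZero ξ).1 h)
  have hHpos : 0 < H ξ := lt_of_le_of_ne (hNonneg ξ) (Ne.symm hHne)
  have hHC2 : ContDiffAt ℝ 2 H ξ := hC2.contDiffAt (isOpen_compl_singleton.mem_nhds hξ)
  have huC : ContDiffAt ℝ 3 u x := hu.contDiffAt (hE.mem_nhds hx)
  set G := gradient H ξ with hGdef
  have hgi : ∀ i, fderiv ℝ H ξ (e i) = G i := by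
    intro i
    rw [he i, hGdef]
    have h1 : (inner ℝ (gradient H ξ) (EuclideanSpace.single i (1:ℝ)) : ℝ)
        = fderiv ℝ H ξ (EuclideanSpace.single i (1:ℝ)) := by
      rw [gradient]
      exact InnerProductSpace.toDual_symm_apply
    rw [← h1, EuclideanSpace.inner_single_right]
    simp
  have hMu_symm : ∀ i j, iteratedFDeriv ℝ 2 u x ![e i, e j]
      = iteratedFDeriv ℝ 2 u x ![e j, e i] := by
    intro i j
    rw [iteratedFDeriv_two_apply, iteratedFDeriv_two_apply]
    simp only [Matrix.cons_val_zero, Matrix.cons_val_one, Matrix.head_cons]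
    exact (huC.isSymmSndFDerivAt (by norm_num)) (e i) (e j)
  have hΛ_symm : ∀ i j, iteratedFDeriv ℝ 2 H ξ ![e i, e j]
      = iteratedFDeriv ℝ 2 H ξ ![e j, e i] := by
    intro i j
    have h := (hPSD ξ hξ).1
    rw [Matrix.IsHermitian, Matrix.conjTranspose_eq_transpose_of_trivial] at h
    exact congrFun (congrFun h j) i
  have hp0 : p ≠ 0 := by linarith
  have key1 : ∀ i j : Fin N, 1 / p * iteratedFDeriv ℝ 2 (fun η => H η ^ p) ξ ![e i, e j]
      = (p - 1) * H ξ ^ (p - 2) * (G i * G j)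
        + H ξ ^ (p - 1) * iteratedFDeriv ℝ 2 H ξ ![e i, e j] := by
    intro i j
    rw [snd_deriv_rpow_comp H ξ p hHC2 hHpos, hgi i, hgi j]
    field_simp
  have key2 : ∀ k l : Fin N, iteratedFDeriv ℝ 2 (fun η => H η ^ 2) ξ ![e k, e l]
      = 2 * (G k * G l) + 2 * H ξ * iteratedFDeriv ℝ 2 H ξ ![e k, e l] := by
    intro k l
    have hfun : (fun η => H η ^ 2) = fun η => H η ^ ((2:ℕ) : ℝ) := by
      funext η
      rw [Real.rpow_natCast]
    rw [hfun, snd_deriv_rpow_comp H ξ _ hHC2 hHpos, hgi k, hgi l]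
    norm_num
    ring
  -- abbreviations (syntactic)
  have hsum1 : (∑ i, ∑ j, 1 / p * iteratedFDeriv ℝ 2 (fun η => H η ^ p) ξ ![e i, e j]
        * iteratedFDeriv ℝ 2 u x ![e i, e j])
      = H ξ ^ (p - 1) * (∑ i, ∑ j, iteratedFDeriv ℝ 2 H ξ ![e i, e j]
          * iteratedFDeriv ℝ 2 u x ![e j, e i])
        + (p - 1) * H ξ ^ (p - 2) * (∑ i, ∑ j, G i * iteratedFDeriv ℝ 2 u x ![e i, e j] * G j) := by
    calc (∑ i, ∑ j, 1 / p * iteratedFDeriv ℝ 2 (fun η => H η ^ p) ξ ![e i, e j]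
          * iteratedFDeriv ℝ 2 u x ![e i, e j])
        = ∑ i, ∑ j, (H ξ ^ (p - 1) * (iteratedFDeriv ℝ 2 H ξ ![e i, e j]
            * iteratedFDeriv ℝ 2 u x ![e j, e i])
          + (p - 1) * H ξ ^ (p - 2) * (G i * iteratedFDeriv ℝ 2 u x ![e i, e j] * G j)) := by
          refine Finset.sum_congr rfl fun i _ => Finset.sum_congr rfl fun j _ => ?_
          rw [key1 i j, hMu_symm j i]
          ring
      _ = _ := by
          simp only [Finset.sum_add_distrib, ← Finset.mul_sum]
  have h1g : ∀ m : Fin N, (∑ i, G i * iteratedFDeriv ℝ 2 u x ![e i, e m])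
      = ∑ i, G i * iteratedFDeriv ℝ 2 u x ![e m, e i] :=
    fun m => Finset.sum_congr rfl fun i _ => by rw [hMu_symm i m]
  have hQcs := trace_CS (Matrix.of fun i j => iteratedFDeriv ℝ 2 H ξ ![e i, e j]) (hPSD ξ hξ)
      (fun i j => iteratedFDeriv ℝ 2 u x ![e i, e j]) (fun i j => hMu_symm i j)
  simp only [Matrix.of_apply] at hQcs
  have hR := quadform_nonneg (Matrix.of fun i j => iteratedFDeriv ℝ 2 H ξ ![e i, e j])
      (hPSD ξ hξ) (fun i => ∑ k, G k * iteratedFDeriv ℝ 2 u x ![e i, e k])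
  simp only [Matrix.of_apply] at hR
  have e2q : (∑ i, ∑ j, ∑ k, ∑ l, iteratedFDeriv ℝ 2 H ξ ![e i, e j]
        * (G k * iteratedFDeriv ℝ 2 u x ![e i, e k])
        * (G l * iteratedFDeriv ℝ 2 u x ![e j, e l]))
      = ∑ i, ∑ j, iteratedFDeriv ℝ 2 H ξ ![e i, e j]
        * (∑ k, G k * iteratedFDeriv ℝ 2 u x ![e i, e k])
        * (∑ k, G k * iteratedFDeriv ℝ 2 u x ![e j, e k]) := by
    refine Finset.sum_congr rfl fun i _ => Finset.sum_congr rfl fun j _ => ?_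
    rw [← Finset.sum_mul_sum, ← Finset.mul_sum]
  have e3q : (∑ i, ∑ j, ∑ k, ∑ l, iteratedFDeriv ℝ 2 H ξ ![e k, e l]
        * (G i * iteratedFDeriv ℝ 2 u x ![e i, e k])
        * (G j * iteratedFDeriv ℝ 2 u x ![e j, e l]))
      = ∑ i, ∑ j, iteratedFDeriv ℝ 2 H ξ ![e i, e j]
        * (∑ k, G k * iteratedFDeriv ℝ 2 u x ![e i, e k])
        * (∑ k, G k * iteratedFDeriv ℝ 2 u x ![e j, e k]) := by
    rw [sum_swap₄ (f := fun i j k l => iteratedFDeriv ℝ 2 H ξ ![e k, e l]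
        * (G i * iteratedFDeriv ℝ 2 u x ![e i, e k])
        * (G j * iteratedFDeriv ℝ 2 u x ![e j, e l]))]
    refine Finset.sum_congr rfl fun k _ => Finset.sum_congr rfl fun l _ => ?_
    rw [← Finset.sum_mul_sum, ← Finset.mul_sum, h1g k, h1g l]
  have e4q : (∑ i, ∑ j, ∑ k, ∑ l, (G i * iteratedFDeriv ℝ 2 u x ![e i, e k] * G k)
        * (G j * iteratedFDeriv ℝ 2 u x ![e j, e l] * G l))
      = (∑ i, ∑ j, G i * iteratedFDeriv ℝ 2 u x ![e i, e j] * G j)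
        * (∑ i, ∑ j, G i * iteratedFDeriv ℝ 2 u x ![e i, e j] * G j) := by
    calc (∑ i, ∑ j, ∑ k, ∑ l, (G i * iteratedFDeriv ℝ 2 u x ![e i, e k] * G k)
          * (G j * iteratedFDeriv ℝ 2 u x ![e j, e l] * G l))
        = ∑ i, ∑ j, (∑ k, G i * iteratedFDeriv ℝ 2 u x ![e i, e k] * G k)
          * (∑ l, G j * iteratedFDeriv ℝ 2 u x ![e j, e l] * G l) :=
          Finset.sum_congr rfl fun i _ => Finset.sum_congr rfl fun j _ =>
            (Finset.sum_mul_sum _ _ _ _).symm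
      _ = _ := (Finset.sum_mul_sum _ _ _ _).symm
  have key_expand : (∑ i, ∑ j, ∑ k, ∑ l,
        1 / p * iteratedFDeriv ℝ 2 (fun η => H η ^ p) ξ ![e i, e j]
        * iteratedFDeriv ℝ 2 (fun η => H η ^ 2) ξ ![e k, e l]
        * iteratedFDeriv ℝ 2 u x ![e i, e k] * iteratedFDeriv ℝ 2 u x ![e j, e l])
      = 2 * H ξ * H ξ ^ (p - 1) * (∑ i, ∑ j, ∑ k, ∑ l, iteratedFDeriv ℝ 2 H ξ ![e i, e j]
            * iteratedFDeriv ℝ 2 H ξ ![e k, e l] * iteratedFDeriv ℝ 2 u x ![e i, e k]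
            * iteratedFDeriv ℝ 2 u x ![e j, e l])
        + 2 * H ξ ^ (p - 1) * (∑ i, ∑ j, iteratedFDeriv ℝ 2 H ξ ![e i, e j]
            * (∑ k, G k * iteratedFDeriv ℝ 2 u x ![e i, e k])
            * (∑ k, G k * iteratedFDeriv ℝ 2 u x ![e j, e k]))
        + 2 * H ξ * ((p - 1) * H ξ ^ (p - 2)) * (∑ i, ∑ j, iteratedFDeriv ℝ 2 H ξ ![e i, e j]
            * (∑ k, G k * iteratedFDeriv ℝ 2 u x ![e i, e k])
            * (∑ k, G k * iteratedFDeriv ℝ 2 u x ![e j, e k]))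
        + 2 * ((p - 1) * H ξ ^ (p - 2))
            * ((∑ i, ∑ j, G i * iteratedFDeriv ℝ 2 u x ![e i, e j] * G j)
              * (∑ i, ∑ j, G i * iteratedFDeriv ℝ 2 u x ![e i, e j] * G j)) := by
    calc (∑ i, ∑ j, ∑ k, ∑ l,
          1 / p * iteratedFDeriv ℝ 2 (fun η => H η ^ p) ξ ![e i, e j]
          * iteratedFDeriv ℝ 2 (fun η => H η ^ 2) ξ ![e k, e l]
          * iteratedFDeriv ℝ 2 u x ![e i, e k] * iteratedFDeriv ℝ 2 u x ![e j, e l])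
        = ∑ i, ∑ j, ∑ k, ∑ l,
          (2 * H ξ * H ξ ^ (p - 1) * (iteratedFDeriv ℝ 2 H ξ ![e i, e j]
            * iteratedFDeriv ℝ 2 H ξ ![e k, e l] * iteratedFDeriv ℝ 2 u x ![e i, e k]
            * iteratedFDeriv ℝ 2 u x ![e j, e l])
          + 2 * H ξ ^ (p - 1) * (iteratedFDeriv ℝ 2 H ξ ![e i, e j]
            * (G k * iteratedFDeriv ℝ 2 u x ![e i, e k])
            * (G l * iteratedFDeriv ℝ 2 u x ![e j, e l]))
          + 2 * H ξ * ((p - 1) * H ξ ^ (p - 2)) * (iteratedFDeriv ℝ 2 H ξ ![e k, e l]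
            * (G i * iteratedFDeriv ℝ 2 u x ![e i, e k])
            * (G j * iteratedFDeriv ℝ 2 u x ![e j, e l]))
          + 2 * ((p - 1) * H ξ ^ (p - 2)) * ((G i * iteratedFDeriv ℝ 2 u x ![e i, e k] * G k)
            * (G j * iteratedFDeriv ℝ 2 u x ![e j, e l] * G l))) := by
          refine Finset.sum_congr rfl fun i _ => Finset.sum_congr rfl fun j _ =>
            Finset.sum_congr rfl fun k _ => Finset.sum_congr rfl fun l _ => ?_
          rw [key1 i j, key2 k l]
          ring
      _ = _ := by
          simp only [Finset.sum_add_distrib]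
          rw [mul_sum₄, mul_sum₄, mul_sum₄, mul_sum₄, e2q, e3q, e4q]
  rw [hsum1, key_expand]
  have hαγ : H ξ ^ (p - 1) = H ξ * H ξ ^ (p - 2) := by
    rw [show p - 1 = 1 + (p - 2) by ring, Real.rpow_add hHpos, Real.rpow_one]
  have hfin := final_scalar (N : ℝ) p (H ξ) (H ξ ^ (p - 2))
      (∑ i, ∑ j, G i * iteratedFDeriv ℝ 2 u x ![e i, e j] * G j)
      (∑ i, ∑ j, iteratedFDeriv ℝ 2 H ξ ![e i, e j] * iteratedFDeriv ℝ 2 u x ![e j, e i])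
      (∑ i, ∑ j, ∑ k, ∑ l, iteratedFDeriv ℝ 2 H ξ ![e i, e j]
        * iteratedFDeriv ℝ 2 H ξ ![e k, e l] * iteratedFDeriv ℝ 2 u x ![e i, e k]
        * iteratedFDeriv ℝ 2 u x ![e j, e l])
      (∑ i, ∑ j, iteratedFDeriv ℝ 2 H ξ ![e i, e j]
        * (∑ k, G k * iteratedFDeriv ℝ 2 u x ![e i, e k])
        * (∑ k, G k * iteratedFDeriv ℝ 2 u x ![e j, e k]))
      (by exact_mod_cast hN) hp hHpos (Real.rpow_pos_of_pos hHpos _) hQcs hR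
  refine le_trans (le_of_eq ?_) (hfin.trans (le_of_eq ?_))
  · rw [hαγ]
  · rw [hαγ]
end
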